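/- arXiv:1702.00595 — 4 statements merged into one kernel-verified Lean document; each statement's English description precedes it below -/
import Mathlib

section
/- For every α ∈ (1,2) and every real u ≠ 0, the limit as ε ↓ 0 of ∫_ℝ |x|^{α-1} e^{-ε|x|} e^{-iux} dx equals 2Γ(α)|u|^{-α} cos(πα/2). -/
open Complex Real Filter MeasureTheory Set Metric

namespace Stmt4Aux

lemma real_int {s b : ℝ} (hs : -1 < s) (hb : 0 < b) :
    IntegrableOn (fun t : ℝ => t ^ s * Real.exp (-b * t)) (Set.Ioi 0) := by
  simpa [Real.rpow_one] using integrableOn_rpow_mul_exp_neg_mul_rpow (p := 1) hs zero_lt_one hb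

lemma contOn (a z : ℂ) :
    ContinuousOn (fun t : ℝ => (t : ℂ) ^ (a - 1) * Complex.exp (-(z * t))) (Set.Ioi 0) := by
  have h2 : Continuous fun t : ℝ => Complex.exp (-(z * t)) :=
    Complex.continuous_exp.comp ((continuous_const.mul Complex.continuous_ofReal).neg)
  intro t ht
  exact ((Complex.continuousAt_ofReal_cpow_const t _ (Or.inr (ne_of_gt ht))).mul
    h2.continuousAt).continuousWithinAt

lemma norm_eq {a z : ℂ} {t : ℝ} (ht : 0 < t) :
    ‖(t : ℂ) ^ (a - 1) * Complex.exp (-(z * t))‖ = t ^ (a.re - 1) * Real.exp (-z.re * t) := by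
  rw [norm_mul,
    Complex.norm_cpow_eq_rpow_re_of_pos ht, Complex.norm_exp]
  simp [Complex.sub_re, Complex.mul_re]

lemma cint {a : ℂ} (ha : 0 < a.re) {z : ℂ} (hz : 0 < z.re) :
    IntegrableOn (fun t : ℝ => (t : ℂ) ^ (a - 1) * Complex.exp (-(z * t))) (Set.Ioi 0) := by
  refine (real_int (s := a.re - 1) (b := z.re) (by linarith) hz).mono'
    ((contOn a z).aestronglyMeasurable measurableSet_Ioi) ?_
  filter_upwards [ae_restrict_mem measurableSet_Ioi] with t ht
  rw [norm_eq ht]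

end Stmt4Aux

namespace Stmt4Aux

lemma key {a : ℂ} (ha : 0 < a.re) {z : ℂ} (hz : 0 < z.re) :
    ∫ t : ℝ in Set.Ioi 0, (t : ℂ) ^ (a - 1) * Complex.exp (-(z * t))
      = Complex.Gamma a * z ^ (-a) := by
  set U : Set ℂ := {w | 0 < w.re} with hUdef
  have hU : IsOpen U := isOpen_lt continuous_const Complex.continuous_re
  set f : ℂ → ℂ := fun w => ∫ t : ℝ in Set.Ioi 0, (t : ℂ) ^ (a - 1) * Complex.exp (-(w * t))
    with hfdef
  set g : ℂ → ℂ := fun w => Complex.Gamma a * w ^ (-a) with hgdef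
  have hf : DifferentiableOn ℂ f U := by
    intro z₀ hz₀
    have hz₀' : 0 < z₀.re := hz₀
    set δ : ℝ := z₀.re / 2 with hδ
    have hδ0 : 0 < δ := half_pos hz₀'
    have main := hasDerivAt_integral_of_dominated_loc_of_deriv_le (μ := volume.restrict (Set.Ioi 0))
      (F := fun w t => (t : ℂ) ^ (a - 1) * Complex.exp (-(w * t)))
      (F' := fun w t => (t : ℂ) ^ (a - 1) * (Complex.exp (-(w * t)) * -(1 * (t : ℂ))))
      (bound := fun t : ℝ => t ^ a.re * Real.exp (-δ * t)) (x₀ := z₀) (Metric.ball_mem_nhds z₀ hδ0)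
      (Eventually.of_forall fun w =>
        (contOn a w).aestronglyMeasurable measurableSet_Ioi)
      (cint ha hz₀') ?_ ?_ ?_ ?_
    · exact (main.2.differentiableAt).differentiableWithinAt
    · -- measurability of F' z₀
      apply ContinuousOn.aestronglyMeasurable _ measurableSet_Ioi
      have h2 : Continuous fun t : ℝ => Complex.exp (-(z₀ * t)) * -(1 * (t : ℂ)) :=
        (Complex.continuous_exp.comp
          ((continuous_const.mul Complex.continuous_ofReal).neg)).mul
          ((continuous_const.mul Complex.continuous_ofReal).neg)
      intro t ht
      exact ((Complex.continuousAt_ofReal_cpow_const t _ (Or.inr (ne_of_gt ht))).mul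
        h2.continuousAt).continuousWithinAt
    · -- bound
      filter_upwards [ae_restrict_mem measurableSet_Ioi] with t ht w hw
      have ht' : 0 < t := ht
      have hre : δ ≤ w.re := by
        have h1 : |(w - z₀).re| ≤ ‖w - z₀‖ := Complex.abs_re_le_norm _
        have h2 : ‖w - z₀‖ < δ := by simpa [dist_eq_norm] using hw
        have := abs_le.mp (h1.trans h2.le)
        simp only [Complex.sub_re] at this
        linarith [this.1]
      have hnorm : ‖(t : ℂ) ^ (a - 1) * (Complex.exp (-(w * t)) * -(1 * (t : ℂ)))‖
          = t ^ (a.re - 1) * (Real.exp (-w.re * t) * t) := by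
        rw [norm_mul, norm_mul,
          Complex.norm_cpow_eq_rpow_re_of_pos ht', Complex.norm_exp]
        simp [Complex.sub_re, Complex.mul_re, abs_of_pos ht']
      rw [hnorm]
      have hpow : t ^ (a.re - 1) * t = t ^ a.re := by
        rw [← Real.rpow_add_one (ne_of_gt ht') (a.re - 1), sub_add_cancel]
      have hrw : t ^ (a.re - 1) * (Real.exp (-w.re * t) * t)
          = t ^ a.re * Real.exp (-w.re * t) := by
        rw [← hpow]; ring
      rw [hrw]
      have : Real.exp (-w.re * t) ≤ Real.exp (-δ * t) := by
        apply Real.exp_le_exp.mpr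
        nlinarith
      exact mul_le_mul_of_nonneg_left this (Real.rpow_nonneg ht'.le _)
    · exact real_int (by linarith) hδ0
    · -- differentiability of integrand
      filter_upwards [ae_restrict_mem measurableSet_Ioi] with t _ w _
      exact (((hasDerivAt_id w).mul_const (t : ℂ)).neg.cexp).const_mul ((t : ℂ) ^ (a - 1))
  have hg : DifferentiableOn ℂ g U := by
    intro w hw
    exact ((differentiableAt_id.cpow (differentiableAt_const _)
      (Complex.mem_slitPlane_iff.mpr (Or.inl hw))).const_mul _).differentiableWithinAt
  have heq : EqOn f g U := by
    apply (hf.analyticOnNhd hU).eqOn_of_preconnected_of_frequently_eq (hg.analyticOnNhd hU)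
      (convex_halfSpace_re_gt 0).isPreconnected (show (1 : ℂ) ∈ U by simp [hUdef])
    have hfg : ∀ r : ℝ, 0 < r → f r = g r := by
      intro r hr
      have h1 : f r = (1 / (r : ℂ)) ^ a * Complex.Gamma a :=
        Complex.integral_cpow_mul_exp_neg_mul_Ioi ha hr
      have h2 : (1 / (r : ℂ)) ^ a = (r : ℂ) ^ (-a) := by
        rw [one_div, Complex.inv_cpow _ _ (by
          rw [Complex.arg_ofReal_of_nonneg hr.le]; exact Real.pi_ne_zero.symm),
          ← Complex.cpow_neg]
      rw [h1, h2, mul_comm]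
    have hseq : Tendsto (fun n : ℕ => ((1 + (1 / ((n : ℝ) + 1)) : ℝ) : ℂ)) atTop
        (nhdsWithin (1 : ℂ) {(1 : ℂ)}ᶜ) := by
      apply tendsto_nhdsWithin_of_tendsto_nhds_of_eventually_within
      · have : Tendsto (fun n : ℕ => (1 + 1 / ((n : ℝ) + 1) : ℝ)) atTop (nhds 1) := by
          simpa using (tendsto_const_nhds (x := (1:ℝ))).add (tendsto_one_div_add_atTop_nhds_zero_nat (𝕜 := ℝ))
        have h' := (Complex.continuous_ofReal.tendsto 1).comp this
        simpa [Function.comp_def] using h'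
      · filter_upwards with n
        simp only [Set.mem_compl_iff, Set.mem_singleton_iff]
        intro h
        have : (1 + 1 / ((n : ℝ) + 1) : ℝ) = 1 := by exact_mod_cast h
        have hpos : (0 : ℝ) < 1 / ((n : ℝ) + 1) := by positivity
        linarith
    apply hseq.frequently
    apply Frequently.of_forall
    intro n
    exact hfg _ (by positivity)
  exact heq hz

end Stmt4Aux

namespace Stmt4Aux

lemma exp_pair (θ : ℝ) :
    Complex.exp ((θ : ℂ) * I) + Complex.exp ((-θ : ℝ) * I) = ((2 * Real.cos θ : ℝ) : ℂ) := by
  rw [Complex.exp_mul_I, Complex.exp_mul_I]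
  push_cast
  rw [Complex.cos_neg, Complex.sin_neg]
  ring

lemma log_mul_I (r : ℝ) (hr : 0 < r) :
    Complex.log ((r : ℂ) * I) = (Real.log r : ℂ) + ((π / 2 : ℝ) : ℂ) * I := by
  apply Complex.ext
  · simp [Complex.log_re, map_mul, Complex.norm_I, Complex.norm_real, abs_of_pos hr]
  · simp [Complex.log_im, Complex.arg_real_mul _ hr, Complex.arg_I]

lemma log_mul_neg_I (r : ℝ) (hr : 0 < r) :
    Complex.log ((r : ℂ) * (-I)) = (Real.log r : ℂ) + ((-(π / 2) : ℝ) : ℂ) * I := by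
  apply Complex.ext
  · simp [Complex.log_re, map_mul, Complex.norm_I, Complex.norm_real, abs_of_pos hr]
  · rw [Complex.log_im, Complex.arg_real_mul _ hr, Complex.arg_neg_I]; simp

lemma cpow_mul_I (r β : ℝ) (hr : 0 < r) :
    ((r : ℂ) * I) ^ (-(β : ℂ)) = ((r ^ (-β) : ℝ) : ℂ) * Complex.exp (((-(π / 2 * β) : ℝ) : ℂ) * I) := by
  have hne : (r : ℂ) * I ≠ 0 := by
    simp [Complex.ofReal_ne_zero, hr.ne', Complex.I_ne_zero]
  rw [Complex.cpow_def_of_ne_zero hne, log_mul_I r hr]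
  have harg : ((Real.log r : ℂ) + ((π / 2 : ℝ) : ℂ) * I) * (-(β : ℂ))
      = ((Real.log r * (-β) : ℝ) : ℂ) + ((-(π / 2 * β) : ℝ) : ℂ) * I := by
    push_cast; ring
  rw [harg, Complex.exp_add]
  congr 1
  rw [← Complex.ofReal_exp, ← Real.rpow_def_of_pos hr]

lemma cpow_mul_neg_I (r β : ℝ) (hr : 0 < r) :
    ((r : ℂ) * (-I)) ^ (-(β : ℂ))
      = ((r ^ (-β) : ℝ) : ℂ) * Complex.exp (((π / 2 * β : ℝ) : ℂ) * I) := by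
  have hne : (r : ℂ) * (-I) ≠ 0 := by
    simp [Complex.ofReal_ne_zero, hr.ne', Complex.I_ne_zero]
  rw [Complex.cpow_def_of_ne_zero hne, log_mul_neg_I r hr]
  have harg : ((Real.log r : ℂ) + ((-(π / 2) : ℝ) : ℂ) * I) * (-(β : ℂ))
      = ((Real.log r * (-β) : ℝ) : ℂ) + ((π / 2 * β : ℝ) : ℂ) * I := by
    push_cast; ring
  rw [harg, Complex.exp_add]
  congr 1
  rw [← Complex.ofReal_exp, ← Real.rpow_def_of_pos hr]

lemma pair (r β : ℝ) (hr : 0 < r) :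
    ((r : ℂ) * I) ^ (-(β : ℂ)) + ((r : ℂ) * (-I)) ^ (-(β : ℂ))
      = ((r ^ (-β) * (2 * Real.cos (π / 2 * β)) : ℝ) : ℂ) := by
  rw [cpow_mul_I r β hr, cpow_mul_neg_I r β hr,
    show ((r ^ (-β) * (2 * Real.cos (π / 2 * β)) : ℝ) : ℂ)
      = ((r ^ (-β) : ℝ) : ℂ) * ((2 * Real.cos (π / 2 * β) : ℝ) : ℂ) by push_cast; ring,
    ← exp_pair (π / 2 * β)]
  push_cast
  ring

end Stmt4Aux

open Stmt4Aux in
theorem stmt4 (α : ℝ) (hα1 : 1 < α) (hα2 : α < 2) (u : ℝ) (hu : u ≠ 0) :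
    Filter.Tendsto
      (fun ε : ℝ => ∫ x : ℝ, ((|x| ^ (α - 1) * Real.exp (-(ε * |x|)) : ℝ) : ℂ)
        * Complex.exp (-(Complex.I * u * x)))
      (nhdsWithin 0 (Set.Ioi 0))
      (nhds ((2 * Real.Gamma α * |u| ^ (-α) * Real.cos (Real.pi * α / 2) : ℝ) : ℂ)) := by
  have hαre : 0 < ((α : ℂ)).re := by simp; linarith
  -- Step 1 : value of the integral for ε > 0
  have hev : ∀ ε ∈ Set.Ioi (0 : ℝ),
      (∫ x : ℝ, ((|x| ^ (α - 1) * Real.exp (-(ε * |x|)) : ℝ) : ℂ)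
          * Complex.exp (-(Complex.I * u * x)))
        = Complex.Gamma α * (((ε : ℂ) + I * u) ^ (-(α : ℂ))
            + ((ε : ℂ) - I * u) ^ (-(α : ℂ))) := by
    intro ε hε
    have hε' : (0 : ℝ) < ε := hε
    set h : ℝ → ℂ := fun x => ((|x| ^ (α - 1) * Real.exp (-(ε * |x|)) : ℝ) : ℂ)
        * Complex.exp (-(Complex.I * u * x)) with hhdef
    set z₁ : ℂ := (ε : ℂ) + I * u with hz₁def
    set z₂ : ℂ := (ε : ℂ) - I * u with hz₂def
    have hz₁ : 0 < z₁.re := by simpa [hz₁def, Complex.add_re, Complex.mul_re] using hε'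
    have hz₂ : 0 < z₂.re := by simpa [hz₂def, Complex.sub_re, Complex.mul_re] using hε'
    have h₁ : Set.EqOn (fun x : ℝ => (x : ℂ) ^ ((α : ℂ) - 1) * Complex.exp (-(z₁ * x)))
        h (Set.Ioi 0) := by
      intro x hx
      have hx' : (0 : ℝ) < x := hx
      simp only [hhdef]
      rw [abs_of_pos hx', Complex.ofReal_mul, Complex.ofReal_cpow hx'.le,
        Complex.ofReal_exp, mul_assoc, ← Complex.exp_add]
      congr 1
      · congr 1
        push_cast
        ring
      · congr 1
        push_cast [hz₁def]
        ring
    have h₂ : Set.EqOn (fun x : ℝ => (x : ℂ) ^ ((α : ℂ) - 1) * Complex.exp (-(z₂ * x)))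
        (fun x : ℝ => h (-x)) (Set.Ioi 0) := by
      intro x hx
      have hx' : (0 : ℝ) < x := hx
      simp only [hhdef]
      rw [abs_neg, abs_of_pos hx', Complex.ofReal_mul, Complex.ofReal_cpow hx'.le,
        Complex.ofReal_exp, mul_assoc, ← Complex.exp_add]
      congr 1
      · congr 1
        push_cast
        ring
      · congr 1
        push_cast [hz₂def]
        ring
    have int₁ : IntegrableOn h (Set.Ioi 0) :=
      (cint hαre hz₁).congr_fun h₁ measurableSet_Ioi
    have intneg : IntegrableOn (fun x => h (-x)) (Set.Ioi 0) :=
      (cint hαre hz₂).congr_fun h₂ measurableSet_Ioi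
    have int₂ : IntegrableOn h (Set.Iic 0) := by
      rw [← (Measure.measurePreserving_neg (volume : Measure ℝ)).integrableOn_comp_preimage
          (Homeomorph.neg ℝ).measurableEmbedding]
      simp only [Function.comp_def, neg_preimage, neg_Iic, neg_zero]
      exact Iff.mpr integrableOn_Ici_iff_integrableOn_Ioi intneg
    have hsplit : (∫ x : ℝ, h x)
        = (∫ x in Set.Iic (0:ℝ), h x) + ∫ x in Set.Ioi (0:ℝ), h x :=
      (intervalIntegral.integral_Iic_add_Ioi int₂ int₁).symm
    have hIic : (∫ x in Set.Iic (0:ℝ), h x) = ∫ x in Set.Ioi (0:ℝ), h (-x) := by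
      simpa using (integral_comp_neg_Ioi 0 h).symm
    have hIoi : (∫ x in Set.Ioi (0:ℝ), h x) = Complex.Gamma α * z₁ ^ (-(α : ℂ)) := by
      rw [← setIntegral_congr_fun measurableSet_Ioi h₁]
      exact key hαre hz₁
    have hIoi' : (∫ x in Set.Ioi (0:ℝ), h (-x)) = Complex.Gamma α * z₂ ^ (-(α : ℂ)) := by
      rw [← setIntegral_congr_fun measurableSet_Ioi h₂]
      exact key hαre hz₂
    rw [hsplit, hIic, hIoi, hIoi']
    ring
  -- Step 2 : the limit of the explicit formula
  have hlim : Tendsto (fun ε : ℝ => Complex.Gamma α * (((ε : ℂ) + I * u) ^ (-(α : ℂ))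
        + ((ε : ℂ) - I * u) ^ (-(α : ℂ)))) (nhdsWithin 0 (Set.Ioi 0))
      (nhds (Complex.Gamma α * ((I * (u : ℂ)) ^ (-(α : ℂ))
        + (-(I * (u : ℂ))) ^ (-(α : ℂ))))) := by
    have t0 : Tendsto (fun ε : ℝ => (ε : ℂ)) (nhdsWithin 0 (Set.Ioi 0)) (nhds 0) := by
      have := (Complex.continuous_ofReal.tendsto 0).mono_left
        (nhdsWithin_le_nhds (s := Set.Ioi (0:ℝ)))
      simpa using this
    have t1 : Tendsto (fun ε : ℝ => (ε : ℂ) + I * u) (nhdsWithin 0 (Set.Ioi 0))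
        (nhds (I * u)) := by
      simpa using t0.add (tendsto_const_nhds (x := I * (u : ℂ)))
    have t2 : Tendsto (fun ε : ℝ => (ε : ℂ) - I * u) (nhdsWithin 0 (Set.Ioi 0))
        (nhds (-(I * u))) := by
      simpa using t0.sub (tendsto_const_nhds (x := I * (u : ℂ)))
    have c1 : ContinuousAt (fun w : ℂ => w ^ (-(α : ℂ))) (I * u) :=
      continuousAt_cpow_const (Complex.mem_slitPlane_iff.mpr (Or.inr (by simp [hu])))
    have c2 : ContinuousAt (fun w : ℂ => w ^ (-(α : ℂ))) (-(I * u)) :=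
      continuousAt_cpow_const (Complex.mem_slitPlane_iff.mpr (Or.inr (by simp [hu])))
    exact tendsto_const_nhds.mul ((c1.tendsto.comp t1).add (c2.tendsto.comp t2))
  -- Step 3 : the value of the limit
  have hval : Complex.Gamma α * ((I * (u : ℂ)) ^ (-(α : ℂ)) + (-(I * (u : ℂ))) ^ (-(α : ℂ)))
      = ((2 * Real.Gamma α * |u| ^ (-α) * Real.cos (Real.pi * α / 2) : ℝ) : ℂ) := by
    rw [Complex.Gamma_ofReal, show Real.pi * α / 2 = π / 2 * α from by ring]
    rcases hu.lt_or_gt with h | h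
    · have hr : 0 < -u := neg_pos.mpr h
      have e1 : I * (u : ℂ) = ((-u : ℝ) : ℂ) * (-I) := by push_cast; ring
      have e2 : -(I * (u : ℂ)) = ((-u : ℝ) : ℂ) * I := by push_cast; ring
      rw [e2, e1, add_comm, pair (-u) α hr, abs_of_neg h]
      push_cast
      ring
    · have e1 : I * (u : ℂ) = ((u : ℝ) : ℂ) * I := by ring
      have e2 : -(I * (u : ℂ)) = ((u : ℝ) : ℂ) * (-I) := by ring
      rw [e2, e1, pair u α h, abs_of_pos h]
      push_cast
      ring
  rw [← hval]
  refine hlim.congr' ?_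
  filter_upwards [self_mem_nhdsWithin] with ε hε
  exact (hev ε hε).symm
end

section
/- For every α ∈ (1,2), every ε with 0 ≤ ε ≤ 2−α, and every real x, one has ||x+1|^{α-1} − 1| ≤ min(|x|^{(α+ε)/2}, |x|^{α-1}). -/
open Real

lemma real_rpow_subadd {a b p : ℝ} (ha : 0 ≤ a) (hb : 0 ≤ b) (hp : 0 ≤ p) (hp1 : p ≤ 1) :
    (a + b) ^ p ≤ a ^ p + b ^ p := by
  have := NNReal.rpow_add_le_add_rpow ⟨a, ha⟩ ⟨b, hb⟩ hp hp1
  have h2 := NNReal.coe_le_coe.mpr this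
  push_cast at h2
  exact h2

lemma key_bound {t p : ℝ} (ht : 0 ≤ t) (hp0 : 0 < p) (hp1 : p ≤ 1) :
    |t ^ p - 1| ≤ |t - 1| ^ p ∧ |t ^ p - 1| ≤ |t - 1| := by
  rcases le_or_gt 1 t with h1 | h1
  · have habs : |t ^ p - 1| = t ^ p - 1 := by
      rw [abs_of_nonneg]
      have : (1:ℝ) = 1 ^ p := (Real.one_rpow p).symm
      nlinarith [Real.rpow_le_rpow (by norm_num : (0:ℝ) ≤ 1) h1 hp0.le,
        Real.one_rpow p]
    have habs2 : |t - 1| = t - 1 := abs_of_nonneg (by linarith)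
    constructor
    · rw [habs, habs2]
      have := real_rpow_subadd (a := t - 1) (b := 1) (by linarith) zero_le_one hp0.le hp1
      rw [Real.one_rpow] at this
      have heq : t - 1 + 1 = t := by ring
      rw [heq] at this
      linarith
    · rw [habs, habs2]
      have : t ^ p ≤ t ^ (1:ℝ) := Real.rpow_le_rpow_of_exponent_le h1 hp1
      rw [Real.rpow_one] at this
      linarith
  · have htp1 : t ^ p ≤ 1 := by
      calc t ^ p ≤ 1 ^ p := Real.rpow_le_rpow ht h1.le hp0.le
      _ = 1 := Real.one_rpow p
    have habs : |t ^ p - 1| = 1 - t ^ p := by rw [abs_sub_comm, abs_of_nonneg]; linarith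
    have habs2 : |t - 1| = 1 - t := by rw [abs_sub_comm, abs_of_nonneg]; linarith
    constructor
    · rw [habs, habs2]
      have := real_rpow_subadd (a := t) (b := 1 - t) ht (by linarith) hp0.le hp1
      have heq : t + (1 - t) = 1 := by ring
      rw [heq, Real.one_rpow] at this
      linarith
    · rw [habs, habs2]
      rcases eq_or_lt_of_le ht with h0 | h0
      · rw [← h0, Real.zero_rpow hp0.ne']
      · have : t ^ (1:ℝ) ≤ t ^ p := Real.rpow_le_rpow_of_exponent_ge h0 h1.le hp1
        rw [Real.rpow_one] at this
        linarith

theorem stmt7 (α : ℝ) (hα1 : 1 < α) (hα2 : α < 2) (ε : ℝ) (hε0 : 0 ≤ ε)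
    (hε : ε ≤ 2 - α) (x : ℝ) :
    |(|x + 1| ^ (α - 1) - 1)| ≤ min (|x| ^ ((α + ε) / 2)) (|x| ^ (α - 1)) := by
  set p := α - 1 with hp
  set q := (α + ε) / 2 with hq
  have hp0 : 0 < p := by simp [hp]; linarith
  have hp1 : p ≤ 1 := by simp [hp]; linarith
  have hpq : p ≤ q := by simp [hp, hq]; linarith
  have hq1 : q ≤ 1 := by simp [hq]; linarith
  obtain ⟨h1, h2⟩ := key_bound (abs_nonneg (x + 1)) hp0 hp1
  have hxle : |(|x + 1| - 1)| ≤ |x| := by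
    have := abs_abs_sub_abs_le_abs_sub (x + 1) 1
    simpa using this
  have hLp : |(|x + 1| ^ p - 1)| ≤ |x| ^ p :=
    h1.trans (Real.rpow_le_rpow (abs_nonneg _) hxle hp0.le)
  have hLx : |(|x + 1| ^ p - 1)| ≤ |x| := h2.trans hxle
  refine le_min ?_ hLp
  rcases le_or_gt (|x|) 1 with hx1 | hx1
  · rcases eq_or_lt_of_le (abs_nonneg x) with h0 | h0
    · rw [← h0] at hLx ⊢
      rw [Real.zero_rpow (by positivity : q ≠ 0)]
      linarith
    · have : |x| ^ (1:ℝ) ≤ |x| ^ q := Real.rpow_le_rpow_of_exponent_ge h0 hx1 hq1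
      rw [Real.rpow_one] at this
      linarith
  · have : |x| ^ p ≤ |x| ^ q := Real.rpow_le_rpow_of_exponent_le hx1.le hpq
    linarith
end

section
/- For every α ∈ (1,2), every ε with 0 ≤ ε ≤ 2−α, and every real x, one has ||x+1|^{α-1} sgn(x+1) − 1| ≤ 3·min(|x|^{(α+ε)/2}, |x|^{α-1}). -/
/-- The left-continuous sign function: `1` for `x > 0` and `-1` for `x ≤ 0`. -/
noncomputable def sgn (x : ℝ) : ℝ := if 0 < x then 1 else -1

theorem stmt8 (α : ℝ) (hα1 : 1 < α) (hα2 : α < 2) (ε : ℝ) (hε0 : 0 ≤ ε)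
    (hε : ε ≤ 2 - α) (x : ℝ) :
    |(|x + 1| ^ (α - 1) * sgn (x + 1) - 1)| ≤ 3 * min (|x| ^ ((α + ε) / 2)) (|x| ^ (α - 1)) := by
  set β := α - 1 with hβdef
  set γ := (α + ε) / 2 with hγdef
  have hβ0 : 0 < β := by simp only [hβdef]; linarith
  have hβ1 : β ≤ 1 := by simp only [hβdef]; linarith
  have hγβ : β ≤ γ := by simp only [hβdef, hγdef]; linarith
  have hγ1 : γ ≤ 1 := by simp only [hγdef]; linarith
  have hγ0 : 0 < γ := by simp only [hγdef]; linarith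
  rcases eq_or_ne x 0 with rfl | hx0
  · simp [sgn, Real.zero_rpow hγ0.ne', Real.zero_rpow hβ0.ne', Real.one_rpow]
  have hxpos : 0 < |x| := abs_pos.mpr hx0
  by_cases h1 : 1 ≤ |x|
  · have hmin : min (|x| ^ γ) (|x| ^ β) = |x| ^ β :=
      min_eq_right (Real.rpow_le_rpow_of_exponent_le h1 hγβ)
    rw [hmin]
    have h2 : |x + 1| ≤ 2 * |x| := by
      have := abs_add_le x 1
      simp only [abs_one] at this
      linarith
    have h3 : |x + 1| ^ β ≤ 2 * |x| ^ β := by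
      calc |x + 1| ^ β ≤ (2 * |x|) ^ β :=
            Real.rpow_le_rpow (abs_nonneg _) h2 hβ0.le
        _ = 2 ^ β * |x| ^ β := Real.mul_rpow (by norm_num) (abs_nonneg _)
        _ ≤ 2 * |x| ^ β := by
            have h2b : (2:ℝ) ^ β ≤ 2 := by
              have := Real.rpow_le_rpow_of_exponent_le (by norm_num : (1:ℝ) ≤ 2) hβ1
              rwa [Real.rpow_one] at this
            exact mul_le_mul_of_nonneg_right h2b (Real.rpow_nonneg (abs_nonneg _) _)
    have h4 : 1 ≤ |x| ^ β := Real.one_le_rpow h1 hβ0.le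
    have h5 : |(|x + 1| ^ β * sgn (x + 1) - 1)| ≤ |x + 1| ^ β + 1 := by
      have hs : |sgn (x + 1)| = 1 := by unfold sgn; split <;> simp
      calc |(|x + 1| ^ β * sgn (x + 1) - 1)|
          ≤ |(|x + 1| ^ β * sgn (x + 1))| + |(1:ℝ)| := abs_sub _ _
        _ = |x + 1| ^ β + 1 := by
            rw [abs_mul, hs, mul_one, abs_one,
              abs_of_nonneg (Real.rpow_nonneg (abs_nonneg _) _)]
    linarith
  · push_neg at h1
    have hmin : min (|x| ^ γ) (|x| ^ β) = |x| ^ γ :=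
      min_eq_left (Real.rpow_le_rpow_of_exponent_ge hxpos h1.le hγβ)
    rw [hmin]
    have hx1 : 0 < x + 1 := by
      have := abs_lt.mp h1
      linarith [this.1]
    have hsgn : sgn (x + 1) = 1 := if_pos hx1
    rw [hsgn, mul_one, abs_of_pos hx1]
    have key : |(x + 1) ^ β - 1| ≤ |x| := by
      rcases le_or_gt 0 x with hx | hx
      · have ha : (1:ℝ) ≤ x + 1 := by linarith
        have h6 : (x + 1) ^ β ≤ x + 1 := by
          have := Real.rpow_le_rpow_of_exponent_le ha hβ1
          rwa [Real.rpow_one] at this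
        have h7 : 1 ≤ (x + 1) ^ β := Real.one_le_rpow ha hβ0.le
        rw [abs_of_nonneg (by linarith), abs_of_nonneg hx]; linarith
      · have ha : x + 1 ≤ 1 := by linarith
        have h6 : x + 1 ≤ (x + 1) ^ β := by
          have := Real.rpow_le_rpow_of_exponent_ge hx1 ha hβ1
          rwa [Real.rpow_one] at this
        have h7 : (x + 1) ^ β ≤ 1 := Real.rpow_le_one hx1.le ha hβ0.le
        rw [abs_of_nonpos (by linarith), abs_of_neg hx]; linarith
    have h8 : |x| ≤ |x| ^ γ := by
      have := Real.rpow_le_rpow_of_exponent_ge hxpos h1.le hγ1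
      rwa [Real.rpow_one] at this
    have h9 : 0 ≤ |x| ^ γ := Real.rpow_nonneg (abs_nonneg _) _
    linarith
end

section
/- Let α ∈ (1,2), β ∈ [−1,1], D > 0, and define F(x) = D(1 − β sgn(x))|x|^{α-1}. Then for every ε ∈ (0, min(α−1, 2−α)) there is a constant C (depending on D, α, β, ε) such that for all x ≠ 0 and all y ∈ ℝ, |F(x+y) − F(x)|² ≤ C · min(|x|^{α−ε−2}|y|^{α+ε}, |y|^{2α−2}). -/
lemma sgn_abs_one (x : ℝ) : |sgn x| = 1 := by
  unfold sgn; split <;> norm_num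

lemma keyB {p q : ℝ} (hp : 0 < p) (hpq : p ≤ q) (hq1 : q ≤ 1) (t : ℝ) :
    |(|1 + t|) ^ p - 1| ≤ 3 * min (|t| ^ q) (|t| ^ p) := by
  have hq0 : 0 < q := lt_of_lt_of_le hp hpq
  rcases eq_or_ne t 0 with rfl | ht0
  · simp [Real.one_rpow, Real.zero_rpow hp.ne', Real.zero_rpow hq0.ne']
  rcases le_or_gt |t| 1 with h1 | h1
  · have hmin : min (|t| ^ q) (|t| ^ p) = |t| ^ q :=
      min_eq_left (Real.rpow_le_rpow_of_exponent_ge (abs_pos.mpr ht0) h1 hpq)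
    rw [hmin]
    have htq : |t| ≤ |t| ^ q := by
      calc |t| = |t| ^ (1:ℝ) := (Real.rpow_one _).symm
      _ ≤ |t| ^ q := Real.rpow_le_rpow_of_exponent_ge (abs_pos.mpr ht0) h1 hq1
    have key : |(|1 + t|) ^ p - 1| ≤ |t| := by
      have hb0 : (0:ℝ) ≤ 1 + t := by
        have := (abs_le.mp h1).1; linarith
      rw [abs_of_nonneg hb0]
      rcases le_or_gt 0 t with htpos | htneg
      · have h1b : (1:ℝ) ≤ 1 + t := by linarith
        have hub : (1+t)^p ≤ 1 + t := by
          calc (1+t)^p ≤ (1+t)^(1:ℝ) :=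
                Real.rpow_le_rpow_of_exponent_le h1b (hpq.trans hq1)
          _ = 1 + t := Real.rpow_one _
        have hlb : (1:ℝ) ≤ (1+t)^p := by
          calc (1:ℝ) = (1+t)^(0:ℝ) := (Real.rpow_zero _).symm
          _ ≤ (1+t)^p := Real.rpow_le_rpow_of_exponent_le h1b hp.le
        rw [abs_of_nonneg (by linarith), abs_of_nonneg htpos]; linarith
      · rcases eq_or_lt_of_le hb0 with hb | hb
        · have ht : t = -1 := by linarith
          subst ht
          norm_num [Real.zero_rpow hp.ne']
        · have hb1 : 1 + t ≤ 1 := by linarith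
          have hlb : 1 + t ≤ (1+t)^p := by
            calc 1 + t = (1+t)^(1:ℝ) := (Real.rpow_one _).symm
            _ ≤ (1+t)^p := Real.rpow_le_rpow_of_exponent_ge hb hb1 (hpq.trans hq1)
          have hub : (1+t)^p ≤ 1 := Real.rpow_le_one hb0 hb1 hp.le
          rw [abs_of_nonpos (by linarith), abs_of_neg htneg]; linarith
    have hq0' : 0 ≤ |t| ^ q := Real.rpow_nonneg (abs_nonneg t) q
    linarith
  · have hmin : min (|t| ^ q) (|t| ^ p) = |t| ^ p :=
      min_eq_right (Real.rpow_le_rpow_of_exponent_le h1.le hpq)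
    rw [hmin]
    have h2 : |1 + t| ≤ 2 * |t| := by
      calc |1+t| ≤ |(1:ℝ)| + |t| := abs_add_le 1 t
      _ ≤ 2 * |t| := by rw [abs_one]; linarith
    have h3 : |1+t|^p ≤ 2 * |t|^p := by
      calc |1+t|^p ≤ (2*|t|)^p := Real.rpow_le_rpow (abs_nonneg _) h2 hp.le
      _ = 2^p * |t|^p := Real.mul_rpow (by norm_num) (abs_nonneg t)
      _ ≤ 2 * |t|^p := by
          have h2p : (2:ℝ)^p ≤ 2 := by
            calc (2:ℝ)^p ≤ (2:ℝ)^(1:ℝ) :=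
                  Real.rpow_le_rpow_of_exponent_le one_le_two (hpq.trans hq1)
            _ = 2 := Real.rpow_one 2
          have h0 := Real.rpow_nonneg (abs_nonneg t) p
          nlinarith
    have h4 : (1:ℝ) ≤ |t|^p := by
      calc (1:ℝ) = |t|^(0:ℝ) := (Real.rpow_zero _).symm
      _ ≤ |t|^p := Real.rpow_le_rpow_of_exponent_le h1.le hp.le
    have h5 : 0 ≤ |1+t|^p := Real.rpow_nonneg (abs_nonneg _) p
    have : |(|1+t|)^p - 1| ≤ |1+t|^p + 1 :=
      abs_le.mpr ⟨by linarith, by linarith⟩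
    linarith

set_option maxHeartbeats 1000000 in
theorem stmt9 (α β D : ℝ) (hα1 : 1 < α) (hα2 : α < 2) (hβ1 : -1 ≤ β) (hβ2 : β ≤ 1)
    (hD : 0 < D) (F : ℝ → ℝ) (hF : ∀ x, F x = D * (1 - β * sgn x) * |x| ^ (α - 1))
    (ε : ℝ) (hε0 : 0 < ε) (hε : ε < min (α - 1) (2 - α)) :
    ∃ C : ℝ, ∀ x : ℝ, x ≠ 0 → ∀ y : ℝ,
      |F (x + y) - F x| ^ 2 ≤ C * min (|x| ^ (α - ε - 2) * |y| ^ (α + ε)) (|y| ^ (2 * α - 2)) := by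
  have hε1 : ε < α - 1 := lt_of_lt_of_le hε (min_le_left _ _)
  have hε2 : ε < 2 - α := lt_of_lt_of_le hε (min_le_right _ _)
  set p : ℝ := α - 1 with hpdef
  set q : ℝ := (α + ε) / 2 with hqdef
  have hp : 0 < p := by rw [hpdef]; linarith
  have hpq : p ≤ q := by rw [hpdef, hqdef]; linarith
  have hq1 : q ≤ 1 := by rw [hqdef]; linarith
  have hq0 : 0 < q := lt_of_lt_of_le hp hpq
  have hr : (α - ε - 2) / 2 = p - q := by rw [hpdef, hqdef]; ring
  clear_value p q
  refine ⟨36 * D ^ 2, fun x hx y => ?_⟩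
  have hxx : (0:ℝ) < |x| := abs_pos.mpr hx
  set t : ℝ := y / x with htdef
  have hxy : x + y = x * (1 + t) := by rw [htdef]; field_simp
  have habs : |x + y| = |x| * |1 + t| := by rw [hxy, abs_mul]
  have hty : |x| * |t| = |y| := by
    rw [htdef, abs_div]; field_simp
  -- the two min arguments (square roots)
  set A : ℝ := |x| ^ ((α - ε - 2)/2) * |y| ^ q with hAdef
  set B : ℝ := |y| ^ p with hBdef
  have hA0 : 0 ≤ A := mul_nonneg (Real.rpow_nonneg (abs_nonneg x) _)
    (Real.rpow_nonneg (abs_nonneg y) _)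
  have hB0 : 0 ≤ B := Real.rpow_nonneg (abs_nonneg y) _
  clear_value t A B
  -- rpow identities
  have hIA : |x| ^ p * |t| ^ q = A := by
    rw [hAdef, hr]
    have h1 : |x| ^ p = |x| ^ (p - q) * |x| ^ q := by
      rw [← Real.rpow_add hxx]; congr 1; ring
    rw [h1, mul_assoc, ← Real.mul_rpow (abs_nonneg x) (abs_nonneg t), hty]
  have hIB : |x| ^ p * |t| ^ p = B := by
    rw [hBdef, ← Real.mul_rpow (abs_nonneg x) (abs_nonneg t), hty]
  -- bound on the |·|^p difference
  have hhd : |(|x + y|) ^ p - |x| ^ p| ≤ 3 * min A B := by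
    have h1 : |x + y| ^ p - |x| ^ p = |x| ^ p * (|1 + t| ^ p - 1) := by
      rw [habs, Real.mul_rpow (abs_nonneg x) (abs_nonneg _)]; ring
    rw [h1, abs_mul, abs_of_nonneg (Real.rpow_nonneg (abs_nonneg x) p)]
    calc |x| ^ p * |(|1 + t|) ^ p - 1|
        ≤ |x| ^ p * (3 * min (|t| ^ q) (|t| ^ p)) :=
          mul_le_mul_of_nonneg_left (keyB hp hpq hq1 t)
            (Real.rpow_nonneg (abs_nonneg x) p)
      _ = 3 * min (|x| ^ p * |t| ^ q) (|x| ^ p * |t| ^ p) := by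
          rw [show |x| ^ p * (3 * min (|t| ^ q) (|t| ^ p))
              = 3 * (|x| ^ p * min (|t| ^ q) (|t| ^ p)) from by ring,
            mul_min_of_nonneg _ _ (Real.rpow_nonneg (abs_nonneg x) p)]
      _ = 3 * min A B := by rw [hIA, hIB]
  -- bound on the signed difference
  have hgd : |sgn (x + y) * |x + y| ^ p - sgn x * |x| ^ p| ≤ 3 * min A B := by
    by_cases hs : sgn (x + y) = sgn x
    · have : sgn (x + y) * |x + y| ^ p - sgn x * |x| ^ p
          = sgn x * (|x + y| ^ p - |x| ^ p) := by rw [hs]; ring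
      rw [this, abs_mul, sgn_abs_one, one_mul]
      exact hhd
    · -- signs differ: |x| ≤ |y| and |x+y| ≤ |y|
      have hy0 : y ≠ 0 := by
        intro h; apply hs; rw [h, add_zero]
      have hkey : |x| ≤ |y| ∧ |x + y| ≤ |y| := by
        unfold sgn at hs
        rcases lt_or_ge 0 x with hx1 | hx1 <;> rcases lt_or_ge 0 (x + y) with hx2 | hx2
        · simp [hx1, hx2] at hs
        · rw [if_pos hx1, if_neg (not_lt.mpr hx2)] at hs
          constructor
          · rw [abs_of_pos hx1, abs_of_neg (by nlinarith : y < 0)]; linarith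
          · rw [abs_of_nonpos hx2, abs_of_neg (by nlinarith : y < 0)]; linarith
        · rw [if_neg (not_lt.mpr hx1), if_pos hx2] at hs
          constructor
          · rw [abs_of_nonpos hx1, abs_of_pos (by nlinarith : 0 < y)]; linarith
          · rw [abs_of_pos hx2, abs_of_pos (by nlinarith : 0 < y)]; linarith
        · simp [not_lt.mpr hx1, not_lt.mpr hx2] at hs
      have hyy : (0:ℝ) < |y| := abs_pos.mpr hy0
      have h1 : |x + y| ^ p ≤ |y| ^ p :=
        Real.rpow_le_rpow (abs_nonneg _) hkey.2 hp.le
      have h2 : |x| ^ p ≤ |y| ^ p :=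
        Real.rpow_le_rpow (abs_nonneg _) hkey.1 hp.le
      have hyB : |y| ^ p ≤ A := by
        have hsum : (α - ε - 2)/2 + q = p := by rw [hpdef, hqdef]; ring
        rw [hAdef]
        calc |y| ^ p = |y| ^ ((α - ε - 2)/2) * |y| ^ q := by
              rw [← Real.rpow_add hyy, hsum]
        _ ≤ |x| ^ ((α - ε - 2)/2) * |y| ^ q := by
            apply mul_le_mul_of_nonneg_right _ (Real.rpow_nonneg (abs_nonneg y) q)
            exact Real.rpow_le_rpow_of_nonpos hxx hkey.1 (by linarith)
      have hm : |y| ^ p ≤ min A B := le_min hyB hBdef.ge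
      calc |sgn (x + y) * |x + y| ^ p - sgn x * |x| ^ p|
          ≤ |sgn (x + y) * |x + y| ^ p| + |sgn x * |x| ^ p| := abs_sub _ _
        _ = |x + y| ^ p + |x| ^ p := by
            rw [abs_mul, abs_mul, sgn_abs_one, sgn_abs_one, one_mul, one_mul,
              abs_of_nonneg (Real.rpow_nonneg (abs_nonneg _) p),
              abs_of_nonneg (Real.rpow_nonneg (abs_nonneg _) p)]
        _ ≤ 2 * |y| ^ p := by linarith
        _ ≤ 3 * min A B := by
            have h0 : (0:ℝ) ≤ min A B := le_min hA0 hB0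
            have := min_le_right A B
            linarith [hm]
  -- assemble
  have hFd : |F (x + y) - F x| ≤ 6 * D * min A B := by
    have hexp : F (x + y) - F x
        = D * ((|x + y| ^ p - |x| ^ p)
          - β * (sgn (x + y) * |x + y| ^ p - sgn x * |x| ^ p)) := by
      rw [hF, hF]; ring
    rw [hexp, abs_mul, abs_of_pos hD]
    have habsβ : |β| ≤ 1 := abs_le.mpr ⟨hβ1, hβ2⟩
    have h1 : |(|x + y| ^ p - |x| ^ p)
        - β * (sgn (x + y) * |x + y| ^ p - sgn x * |x| ^ p)|
        ≤ |(|x + y|) ^ p - |x| ^ p|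
          + |β| * |sgn (x + y) * |x + y| ^ p - sgn x * |x| ^ p| := by
      calc _ ≤ |(|x + y|) ^ p - |x| ^ p|
            + |β * (sgn (x + y) * |x + y| ^ p - sgn x * |x| ^ p)| := abs_sub _ _
        _ = _ := by rw [abs_mul]
    have h2 : |β| * |sgn (x + y) * |x + y| ^ p - sgn x * |x| ^ p|
        ≤ 3 * min A B := by
      calc |β| * |sgn (x + y) * |x + y| ^ p - sgn x * |x| ^ p|
          ≤ 1 * |sgn (x + y) * |x + y| ^ p - sgn x * |x| ^ p| :=
            mul_le_mul_of_nonneg_right habsβ (abs_nonneg _)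
        _ = _ := one_mul _
        _ ≤ 3 * min A B := hgd
    have h3 : |(|x + y|) ^ p - |x| ^ p
        - β * (sgn (x + y) * |x + y| ^ p - sgn x * |x| ^ p)| ≤ 6 * min A B := by
      linarith
    calc D * |(|x + y|) ^ p - |x| ^ p
          - β * (sgn (x + y) * |x + y| ^ p - sgn x * |x| ^ p)|
        ≤ D * (6 * min A B) := mul_le_mul_of_nonneg_left h3 hD.le
      _ = 6 * D * min A B := by ring
  -- square both sides
  have hsq : ∀ (u r : ℝ), 0 ≤ u → (u ^ r) ^ 2 = u ^ (r * 2) := by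
    intro u r hu
    rw [Real.rpow_mul hu, ← Real.rpow_natCast (u ^ r) 2]
    norm_num
  have hA2 : A ^ 2 = |x| ^ (α - ε - 2) * |y| ^ (α + ε) := by
    rw [hAdef, mul_pow, hsq _ _ (abs_nonneg x), hsq _ _ (abs_nonneg y)]
    rw [hqdef]
    norm_num
  have hB2 : B ^ 2 = |y| ^ (2 * α - 2) := by
    rw [hBdef, hsq _ _ (abs_nonneg y), hpdef]
    ring_nf
  have hmin2 : (min A B) ^ 2
      = min (|x| ^ (α - ε - 2) * |y| ^ (α + ε)) (|y| ^ (2 * α - 2)) := by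
    rcases le_total A B with h | h
    · rw [min_eq_left h, ← hA2, ← hB2, min_eq_left (pow_le_pow_left₀ hA0 h 2)]
    · rw [min_eq_right h, ← hA2, ← hB2, min_eq_right (pow_le_pow_left₀ hB0 h 2)]
    
  calc |F (x + y) - F x| ^ 2 ≤ (6 * D * min A B) ^ 2 :=
        pow_le_pow_left₀ (abs_nonneg _) hFd 2
    _ = 36 * D ^ 2 * (min A B) ^ 2 := by ring
    _ = _ := by rw [hmin2]
end
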